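/- Let H ∈ C²(M), Ω₀ a connected component of H^{−1}((h₀,h₁)) with |∇H| ≥ c₀ > 0 on it, and X the flow of b = ∇⊥H. Then there is a constant C (depending on H, Ω₀) such that for every x, y ∈ Ω₀ and t ≥ 0: d_M(X(t,x), X(t,y)) ≤ C·(1+t)·d_M(x,y), i.e. the flow map restricted to Ω₀ has Lipschitz constant growing at most linearly in time. -/

import Mathlib

open Real Set

/-- The perpendicular gradient `∇⊥H = (−∂₂H, ∂₁H)`. -/
noncomputable def perpGrad (H : EuclideanSpace ℝ (Fin 2) → ℝ) (x : EuclideanSpace ℝ (Fin 2)) :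
    EuclideanSpace ℝ (Fin 2) :=
  (WithLp.equiv 2 (Fin 2 → ℝ)).symm ![-(gradient H x 1), gradient H x 0]

open scoped RealInnerProductSpace

lemma perpGrad_apply_zero (H : EuclideanSpace ℝ (Fin 2) → ℝ) (x : EuclideanSpace ℝ (Fin 2)) :
    perpGrad H x 0 = -(gradient H x 1) := rfl

lemma perpGrad_apply_one (H : EuclideanSpace ℝ (Fin 2) → ℝ) (x : EuclideanSpace ℝ (Fin 2)) :
    perpGrad H x 1 = gradient H x 0 := rfl

lemma inner_two (u v : EuclideanSpace ℝ (Fin 2)) : ⟪u, v⟫ = u 0 * v 0 + u 1 * v 1 := by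
  simp [PiLp.inner_apply, Fin.sum_univ_two, RCLike.inner_apply, conj_trivial]; ring

lemma norm_sq_two (u : EuclideanSpace ℝ (Fin 2)) : ‖u‖ ^ 2 = u 0 ^ 2 + u 1 ^ 2 := by
  rw [← real_inner_self_eq_norm_sq, inner_two]; ring

lemma inner_gradient_perpGrad (H : EuclideanSpace ℝ (Fin 2) → ℝ) (x : EuclideanSpace ℝ (Fin 2)) :
    ⟪gradient H x, perpGrad H x⟫ = 0 := by
  rw [inner_two, perpGrad_apply_zero, perpGrad_apply_one]; ring

lemma norm_perpGrad (H : EuclideanSpace ℝ (Fin 2) → ℝ) (x : EuclideanSpace ℝ (Fin 2)) :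
    ‖perpGrad H x‖ = ‖gradient H x‖ := by
  have h1 : ‖perpGrad H x‖ ^ 2 = ‖gradient H x‖ ^ 2 := by
    rw [norm_sq_two, norm_sq_two, perpGrad_apply_zero, perpGrad_apply_one]; ring
  nlinarith [norm_nonneg (perpGrad H x), norm_nonneg (gradient H x)]

lemma lagrange_orth (H : EuclideanSpace ℝ (Fin 2) → ℝ) (x : EuclideanSpace ℝ (Fin 2))
    (z : EuclideanSpace ℝ (Fin 2)) (hz : ⟪z, perpGrad H x⟫ = 0) :
    ⟪gradient H x, z⟫ ^ 2 = ‖gradient H x‖ ^ 2 * ‖z‖ ^ 2 := by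
  rw [inner_two] at hz ⊢
  rw [perpGrad_apply_zero, perpGrad_apply_one] at hz
  rw [norm_sq_two, norm_sq_two]
  nlinarith [hz]

lemma contDiff_gradient_of (H : EuclideanSpace ℝ (Fin 2) → ℝ) (hH : ContDiff ℝ 2 H) :
    ContDiff ℝ 1 (gradient H) := by
  have h1 : ContDiff ℝ 1 (fderiv ℝ H) := hH.fderiv_right (by norm_num)
  have h2 : gradient H = fun x => (InnerProductSpace.toDual ℝ
      (EuclideanSpace ℝ (Fin 2))).symm (fderiv ℝ H x) := rfl
  rw [h2]
  exact (InnerProductSpace.toDual ℝ (EuclideanSpace ℝ (Fin 2))).symm.contDiff.comp h1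

lemma contDiff_perpGrad (H : EuclideanSpace ℝ (Fin 2) → ℝ) (hH : ContDiff ℝ 2 H) :
    ContDiff ℝ 1 (perpGrad H) := by
  have hg := contDiff_gradient_of H hH
  have h0 : ContDiff ℝ 1 (fun x => gradient H x 0) := by
    simpa [Function.comp_def] using (EuclideanSpace.proj (0 : Fin 2)).contDiff.comp hg
  have h1 : ContDiff ℝ 1 (fun x => gradient H x 1) := by
    simpa [Function.comp_def] using (EuclideanSpace.proj (1 : Fin 2)).contDiff.comp hg
  have key : ContDiff ℝ 1 (fun x => (![-(gradient H x 1), gradient H x 0] : Fin 2 → ℝ)) := by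
    rw [contDiff_pi]
    intro i
    fin_cases i
    · simpa using h1.neg
    · simpa using h0
  exact ((PiLp.continuousLinearEquiv 2 ℝ (fun _ : Fin 2 => ℝ)).symm.contDiff).comp key

lemma fderiv_apply_eq_inner_gradient (H : EuclideanSpace ℝ (Fin 2) → ℝ)
    (x v : EuclideanSpace ℝ (Fin 2)) : fderiv ℝ H x v = ⟪gradient H x, v⟫ := by
  rw [show gradient H x = (InnerProductSpace.toDual ℝ
      (EuclideanSpace ℝ (Fin 2))).symm (fderiv ℝ H x) from rfl]
  rw [InnerProductSpace.toDual_symm_apply]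

lemma norm_fderiv_eq_norm_gradient (H : EuclideanSpace ℝ (Fin 2) → ℝ)
    (x : EuclideanSpace ℝ (Fin 2)) : ‖fderiv ℝ H x‖ = ‖gradient H x‖ := by
  have : fderiv ℝ H x = InnerProductSpace.toDual ℝ _ (gradient H x) := by
    rw [show gradient H x = (InnerProductSpace.toDual ℝ
      (EuclideanSpace ℝ (Fin 2))).symm (fderiv ℝ H x) from rfl]
    simp
  rw [this]
  exact (InnerProductSpace.toDual ℝ _).norm_map _

lemma helper_sq_le (c a : ℝ) (hc : 0 ≤ c) (ha : 0 ≤ a) (h : c ^ 2 ≤ a ^ 2) : c ≤ a := by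
  nlinarith

lemma helper_mul_sq (c g r : ℝ) (hc : 0 ≤ c) (hr : 0 ≤ r) (hg : c ≤ g) :
    (c * r) ^ 2 ≤ g ^ 2 * r ^ 2 := by
  rw [mul_pow]
  exact mul_le_mul_of_nonneg_right (pow_le_pow_left₀ hc hg 2) (sq_nonneg r)

lemma helper_quad (m r c : ℝ) (hr : 0 ≤ r) (h : m * r ≤ c / 2) : m * r ^ 2 ≤ c / 2 * r := by
  nlinarith

set_option maxHeartbeats 1000000

/-- Linear-in-time Lipschitz growth of the flow on a good invariant component:
if `H ∈ C²`, `Ω₀` is a connected component of `H⁻¹((h₀,h₁))` with `|∇H| ≥ c₀ > 0`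
on it, and `X` is the flow of `b = ∇⊥H` leaving `Ω₀` invariant, then there is `C`
with `dist(X(t,x), X(t,y)) ≤ C(1+t)·dist(x,y)` for all `x, y ∈ Ω₀` and `t ≥ 0`. -/
theorem stmt_11
    (h₀ h₁ c₀ : ℝ) (hh : h₀ < h₁) (hc₀ : 0 < c₀)
    (H : EuclideanSpace ℝ (Fin 2) → ℝ) (hH : ContDiff ℝ 2 H)
    (Ω₀ : Set (EuclideanSpace ℝ (Fin 2)))
    (hΩ₀conn : IsConnected Ω₀) (hΩ₀open : IsOpen Ω₀)
    (hΩ₀comp : IsCompact (closure Ω₀))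
    (hΩ₀max : ∀ V : Set (EuclideanSpace ℝ (Fin 2)), IsConnected V →
      V ⊆ H ⁻¹' (Ioo h₀ h₁) → Ω₀ ⊆ V → V = Ω₀)  -- `Ω₀` is a connected component
    (hΩ₀sub : Ω₀ ⊆ H ⁻¹' (Ioo h₀ h₁))
    (hgrad : ∀ x ∈ closure Ω₀, c₀ ≤ ‖gradient H x‖)
    (X : ℝ → EuclideanSpace ℝ (Fin 2) → EuclideanSpace ℝ (Fin 2))
    (hX0 : ∀ x, X 0 x = x)
    (hflow : ∀ x ∈ Ω₀, ∀ t : ℝ, HasDerivAt (fun s => X s x) (perpGrad H (X t x)) t)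
    (hΩinv : ∀ t : ℝ, X t '' Ω₀ = Ω₀) :
    ∃ C > (0:ℝ), ∀ x ∈ Ω₀, ∀ y ∈ Ω₀, ∀ t : ℝ, 0 ≤ t →
      dist (X t x) (X t y) ≤ C * (1 + t) * dist x y := by
  have hcl : Ω₀ ⊆ closure Ω₀ := subset_closure
  have hmem : ∀ x ∈ Ω₀, ∀ t : ℝ, X t x ∈ Ω₀ := fun x hx t => (hΩinv t) ▸ mem_image_of_mem _ hx
  obtain ⟨R, hR0, hRS⟩ : ∃ R : ℝ, 0 ≤ R ∧ closure Ω₀ ⊆ Metric.closedBall 0 R := by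
    obtain ⟨r, hr⟩ := hΩ₀comp.isBounded.subset_closedBall 0
    exact ⟨max r 0, le_max_right _ _, hr.trans (Metric.closedBall_subset_closedBall (le_max_left _ _))⟩
  set S : Set (EuclideanSpace ℝ (Fin 2)) := Metric.closedBall 0 R with hSdef
  have hSconv : Convex ℝ S := convex_closedBall _ _
  have hScomp : IsCompact S := isCompact_closedBall _ _
  have hΩS : Ω₀ ⊆ S := fun z hz => hRS (hcl hz)
  have hb1 : ContDiff ℝ 1 (perpGrad H) := contDiff_perpGrad H hH
  have hbdiff : Differentiable ℝ (perpGrad H) := hb1.differentiable (by norm_num)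
  have hgrad1 : ContDiff ℝ 1 (gradient H) := contDiff_gradient_of H hH
  have hHdiff : Differentiable ℝ H := hH.differentiable (by norm_num)
  -- constants
  obtain ⟨Λ, hΛ1, hΛ⟩ : ∃ Λ : ℝ, 1 ≤ Λ ∧ ∀ z ∈ S, ‖gradient H z‖ ≤ Λ := by
    obtain ⟨c, hc⟩ := hScomp.exists_bound_of_continuousOn (hgrad1.continuous.continuousOn)
    exact ⟨max c 1, le_max_right _ _, fun z hz => (hc z hz).trans (le_max_left _ _)⟩
  obtain ⟨L, hL1, hL⟩ : ∃ L : ℝ, 1 ≤ L ∧ ∀ z ∈ S, ‖fderiv ℝ (perpGrad H) z‖ ≤ L := by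
    obtain ⟨c, hc⟩ := hScomp.exists_bound_of_continuousOn
      ((hb1.continuous_fderiv (by norm_num)).continuousOn)
    exact ⟨max c 1, le_max_right _ _, fun z hz => (hc z hz).trans (le_max_left _ _)⟩
  obtain ⟨M, hM1, hM⟩ : ∃ M : ℝ, 1 ≤ M ∧ ∀ z ∈ S, ∀ w ∈ S,
      ‖gradient H z - gradient H w‖ ≤ M * ‖z - w‖ := by
    obtain ⟨c, hc⟩ := hScomp.exists_bound_of_continuousOn
      ((hgrad1.continuous_fderiv (by norm_num)).continuousOn)
    refine ⟨max c 1, le_max_right _ _, fun z hz w hw => ?_⟩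
    exact Convex.norm_image_sub_le_of_norm_fderiv_le
      (fun u _ => (hgrad1.differentiable (by norm_num)) u)
      (fun u hu => (hc u hu).trans (le_max_left _ _)) hSconv hw hz
  have hΛ0 : (0:ℝ) < Λ := lt_of_lt_of_le one_pos hΛ1
  have hL0 : (0:ℝ) < L := lt_of_lt_of_le one_pos hL1
  have hM0 : (0:ℝ) < M := lt_of_lt_of_le one_pos hM1
  have hbnorm : ∀ z ∈ Ω₀, ‖perpGrad H z‖ ≤ Λ := fun z hz => by
    rw [norm_perpGrad]; exact hΛ z (hΩS hz)
  have hblow : ∀ z ∈ Ω₀, c₀ ≤ ‖perpGrad H z‖ := fun z hz => by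
    rw [norm_perpGrad]; exact hgrad z (hcl hz)
  have hblip : ∀ z ∈ S, ∀ w ∈ S, ‖perpGrad H z - perpGrad H w‖ ≤ L * ‖z - w‖ := by
    intro z hz w hw
    exact Convex.norm_image_sub_le_of_norm_fderiv_le (fun u _ => hbdiff u)
      (fun u hu => hL u hu) hSconv hw hz
  have hHlip : ∀ z ∈ S, ∀ w ∈ S, |H z - H w| ≤ Λ * ‖z - w‖ := by
    intro z hz w hw
    have := Convex.norm_image_sub_le_of_norm_fderiv_le (fun u _ => hHdiff u)
      (fun u hu => by rw [norm_fderiv_eq_norm_gradient]; exact hΛ u hu) hSconv hw hz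
    simpa [Real.norm_eq_abs] using this
  have hspeed : ∀ x ∈ Ω₀, ∀ a c : ℝ, ‖X a x - X c x‖ ≤ Λ * |a - c| := by
    intro x hx a c
    have hder : ∀ t ∈ (univ : Set ℝ), HasDerivWithinAt (fun s => X s x)
        (perpGrad H (X t x)) univ t := fun t _ => (hflow x hx t).hasDerivWithinAt
    have := convex_univ.norm_image_sub_le_of_norm_hasDerivWithin_le hder
      (fun t _ => hbnorm _ (hmem x hx t)) (mem_univ c) (mem_univ a)
    simpa [Real.norm_eq_abs] using this
  have hcons : ∀ x ∈ Ω₀, ∀ t : ℝ, H (X t x) = H x := by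
    intro x hx t
    have hd : ∀ u : ℝ, HasDerivAt (fun s => H (X s x)) 0 u := by
      intro u
      have h2 : HasFDerivAt H (fderiv ℝ H (X u x)) (X u x) := (hHdiff _).hasFDerivAt
      have := h2.comp_hasDerivAt u (hflow x hx u)
      rwa [fderiv_apply_eq_inner_gradient, inner_gradient_perpGrad] at this
    have := is_const_of_deriv_eq_zero (fun u => (hd u).differentiableAt)
      (fun u => (hd u).deriv) t 0
    simpa [hX0] using this
  have htaylor : ∀ p ∈ Ω₀, ∀ w ∈ Ω₀,
      |H w - H p - ⟪gradient H p, w - p⟫| ≤ M * ‖w - p‖ ^ 2 := by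
    intro p hp w hw
    set g := gradient H p with hgdef
    set φ : EuclideanSpace ℝ (Fin 2) → ℝ := fun z => H z - ⟪g, z⟫ with hφdef
    have hφd : ∀ z, HasFDerivAt φ (fderiv ℝ H z - InnerProductSpace.toDual ℝ _ g) z := by
      intro z
      refine ((hHdiff z).hasFDerivAt).sub ?_
      have h := (InnerProductSpace.toDual ℝ (EuclideanSpace ℝ (Fin 2)) g).hasFDerivAt (x := z)
      have he : ⇑(InnerProductSpace.toDual ℝ (EuclideanSpace ℝ (Fin 2)) g)
          = fun z : EuclideanSpace ℝ (Fin 2) => ⟪g, z⟫ := by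
        funext u; exact InnerProductSpace.toDual_apply_apply
      rwa [he] at h
    have hseg : segment ℝ p w ⊆ S := hSconv.segment_subset (hΩS hp) (hΩS hw)
    have hbound : ∀ z ∈ segment ℝ p w,
        ‖fderiv ℝ φ z‖ ≤ M * ‖w - p‖ := by
      intro z hz
      have hzp : ‖z - p‖ ≤ ‖w - p‖ := by
        rw [segment_eq_image'] at hz
        obtain ⟨θ, hθ, rfl⟩ := hz
        rw [add_sub_cancel_left, norm_smul, Real.norm_eq_abs, abs_of_nonneg hθ.1]
        exact mul_le_of_le_one_left (norm_nonneg _) hθ.2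
      have h1 : fderiv ℝ φ z = fderiv ℝ H z - InnerProductSpace.toDual ℝ _ g := (hφd z).fderiv
      rw [h1]
      have h2 : fderiv ℝ H z = InnerProductSpace.toDual ℝ _ (gradient H z) := by
        rw [show gradient H z = (InnerProductSpace.toDual ℝ
          (EuclideanSpace ℝ (Fin 2))).symm (fderiv ℝ H z) from rfl]
        simp
      rw [h2, ← map_sub]
      rw [show ‖(InnerProductSpace.toDual ℝ (EuclideanSpace ℝ (Fin 2))) (gradient H z - g)‖
        = ‖gradient H z - g‖ from (InnerProductSpace.toDual ℝ _).norm_map _]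
      calc ‖gradient H z - g‖ ≤ M * ‖z - p‖ := hM z (hseg hz) p (hΩS hp)
        _ ≤ M * ‖w - p‖ := mul_le_mul_of_nonneg_left hzp hM0.le
    have key := Convex.norm_image_sub_le_of_norm_fderiv_le
      (fun z _ => (hφd z).differentiableAt)
      hbound (convex_segment p w) (left_mem_segment ℝ p w) (right_mem_segment ℝ p w)
    have hφwp : φ w - φ p = H w - H p - ⟪g, w - p⟫ := by
      simp only [hφdef, inner_sub_right]; ring
    calc |H w - H p - ⟪g, w - p⟫| = ‖φ w - φ p‖ := by rw [hφwp, Real.norm_eq_abs]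
      _ ≤ M * ‖w - p‖ * ‖w - p‖ := key
      _ = M * ‖w - p‖ ^ 2 := by ring
  have hrefine : ∀ w ∈ Ω₀, ∀ p ∈ Ω₀, ⟪w - p, perpGrad H p⟫ = 0 →
      ‖w - p‖ ≤ c₀ / (2 * M) → c₀ * ‖w - p‖ ≤ 2 * |H w - H p| := by
    intro w hw p hp hortho hsm
    have hlag := lagrange_orth H p (w - p) hortho
    have hgp : c₀ ≤ ‖gradient H p‖ := hgrad p (hcl hp)
    have hsq : (c₀ * ‖w - p‖) ^ 2 ≤ |⟪gradient H p, w - p⟫| ^ 2 := by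
      rw [sq_abs, hlag]
      exact helper_mul_sq c₀ ‖gradient H p‖ ‖w - p‖ hc₀.le (norm_nonneg _) hgp
    have h1 : c₀ * ‖w - p‖ ≤ |⟪gradient H p, w - p⟫| :=
      helper_sq_le _ _ (mul_nonneg hc₀.le (norm_nonneg _)) (abs_nonneg _) hsq
    have htay := htaylor p hp w hw
    have h2 : |⟪gradient H p, w - p⟫| ≤ |H w - H p| + M * ‖w - p‖ ^ 2 := by
      have := abs_sub_abs_le_abs_sub (H w - H p) (H w - H p - ⟪gradient H p, w - p⟫)
      have h3 : (H w - H p) - (H w - H p - ⟪gradient H p, w - p⟫) = ⟪gradient H p, w - p⟫ := by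
        ring
      calc |⟪gradient H p, w - p⟫| = |(H w - H p) - (H w - H p - ⟪gradient H p, w - p⟫)| := by
            rw [h3]
        _ ≤ |H w - H p| + |H w - H p - ⟪gradient H p, w - p⟫| := abs_sub _ _
        _ ≤ |H w - H p| + M * ‖w - p‖ ^ 2 := by linarith
    have h4 : M * ‖w - p‖ ^ 2 ≤ c₀ / 2 * ‖w - p‖ := by
      refine helper_quad M ‖w - p‖ c₀ (norm_nonneg _) ?_
      calc M * ‖w - p‖ ≤ M * (c₀ / (2 * M)) := mul_le_mul_of_nonneg_left hsm hM0.le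
        _ = c₀ / 2 := by field_simp
    linarith
  have hgron : ∀ x ∈ Ω₀, ∀ y ∈ Ω₀, ∀ a θ0 δ0 : ℝ, ‖X a y - X θ0 x‖ ≤ δ0 →
      ∀ s : ℝ, 0 ≤ s → s ≤ 1 → ‖X (a + s) y - X (θ0 + s) x‖ ≤ δ0 * Real.exp L := by
    intro x hx y hy a θ0 δ0 hδ0 s hs0 hs1
    have hδ0nn : 0 ≤ δ0 := le_trans (norm_nonneg _) hδ0
    set f : ℝ → EuclideanSpace ℝ (Fin 2) := fun σ => X (a + σ) y - X (θ0 + σ) x with hfdef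
    set f' : ℝ → EuclideanSpace ℝ (Fin 2) :=
      fun σ => perpGrad H (X (a + σ) y) - perpGrad H (X (θ0 + σ) x) with hf'def
    have hshift : ∀ (c σ₀ : ℝ), HasDerivAt (fun σ : ℝ => c + σ) 1 σ₀ := by
      intro c σ₀
      simpa using (hasDerivAt_id σ₀).const_add c
    have hf' : ∀ σ : ℝ, HasDerivAt f (f' σ) σ := by
      intro σ
      have d1 : HasDerivAt (fun σ : ℝ => X (a + σ) y) (perpGrad H (X (a + σ) y)) σ := by
        have := HasDerivAt.scomp_of_eq σ (hflow y hy (a + σ)) (hshift a σ) rfl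
        rw [one_smul] at this
        exact this
      have d2 : HasDerivAt (fun σ : ℝ => X (θ0 + σ) x) (perpGrad H (X (θ0 + σ) x)) σ := by
        have := HasDerivAt.scomp_of_eq σ (hflow x hx (θ0 + σ)) (hshift θ0 σ) rfl
        rw [one_smul] at this
        exact this
      exact d1.sub d2
    have hcont : ContinuousOn f (Icc 0 s) :=
      (fun σ _ => ((hf' σ).continuousAt.continuousWithinAt))
    have key := norm_le_gronwallBound_of_norm_deriv_right_le hcont
      (fun σ _ => (hf' σ).hasDerivWithinAt) (by simpa [hfdef] using hδ0)
      (K := L) (ε := 0) (fun σ _ => by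
        have h1 := hblip (X (a + σ) y) (hΩS (hmem y hy (a + σ)))
          (X (θ0 + σ) x) (hΩS (hmem x hx (θ0 + σ)))
        simpa [hf'def, hfdef] using h1.trans_eq (by ring))
    have h2 := key s (by constructor <;> [exact hs0; exact le_refl s])
    rw [sub_zero, gronwallBound_ε0] at h2
    refine h2.trans ?_
    have : Real.exp (L * s) ≤ Real.exp L := by
      apply Real.exp_le_exp.2
      nlinarith
    exact mul_le_mul_of_nonneg_left this hδ0nn
  have hfoot : ∀ x ∈ Ω₀, ∀ w ∈ Ω₀, ∀ θg η : ℝ, 0 ≤ η → ‖w - X θg x‖ ≤ η →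
      η * (1 + 4 * Λ ^ 2 / c₀ ^ 2) ≤ c₀ ^ 2 / (2 * L * Λ) →
      ∃ θ : ℝ, |θ - θg| ≤ 4 * Λ * η / c₀ ^ 2 ∧ ⟪w - X θ x, perpGrad H (X θ x)⟫ = 0 ∧
        ‖w - X θ x‖ ≤ η * (1 + 4 * Λ ^ 2 / c₀ ^ 2) := by
    intro x hx w hw θg η hη hwθ hthr
    set β := 4 * Λ * η / c₀ ^ 2 with hβdef
    have hβ0 : 0 ≤ β := by positivity
    set g : ℝ → ℝ := fun θ => ⟪w - X θ x, perpGrad H (X θ x)⟫ with hgdef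
    set D : ℝ → ℝ := fun θ =>
      ⟪w - X θ x, fderiv ℝ (perpGrad H) (X θ x) (perpGrad H (X θ x))⟫ +
        ⟪-(perpGrad H (X θ x)), perpGrad H (X θ x)⟫ with hDdef
    have hg' : ∀ θ : ℝ, HasDerivAt g (D θ) θ := by
      intro θ
      have d1 : HasDerivAt (fun θ : ℝ => w - X θ x) (-(perpGrad H (X θ x))) θ := by
        have := (hasDerivAt_const θ w).sub (hflow x hx θ)
        rw [zero_sub] at this
        exact this
      have d2 : HasDerivAt (fun θ : ℝ => perpGrad H (X θ x))
          (fderiv ℝ (perpGrad H) (X θ x) (perpGrad H (X θ x))) θ :=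
        (hbdiff _).hasFDerivAt.comp_hasDerivAt θ (hflow x hx θ)
      exact HasDerivAt.inner (𝕜 := ℝ) d1 d2
    have hIdist : ∀ θ ∈ Icc (θg - β) (θg + β),
        ‖w - X θ x‖ ≤ η * (1 + 4 * Λ ^ 2 / c₀ ^ 2) := by
      intro θ hθ
      have habs : |θg - θ| ≤ β := by
        rw [abs_sub_comm]
        exact abs_le.2 ⟨by linarith [hθ.1], by linarith [hθ.2]⟩
      have htri : ‖w - X θ x‖ ≤ ‖w - X θg x‖ + ‖X θg x - X θ x‖ := by
        have := dist_triangle w (X θg x) (X θ x)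
        simpa [dist_eq_norm] using this
      have hsp := hspeed x hx θg θ
      have hmul : Λ * |θg - θ| ≤ Λ * β := mul_le_mul_of_nonneg_left habs hΛ0.le
      have hfin : η + Λ * β = η * (1 + 4 * Λ ^ 2 / c₀ ^ 2) := by
        rw [hβdef]; field_simp
      linarith
    have hDneg : ∀ θ ∈ Icc (θg - β) (θg + β), D θ ≤ -(c₀ ^ 2 / 2) := by
      intro θ hθ
      have hmm := hmem x hx θ
      have hop : ‖fderiv ℝ (perpGrad H) (X θ x) (perpGrad H (X θ x))‖ ≤ L * Λ := by
        calc ‖fderiv ℝ (perpGrad H) (X θ x) (perpGrad H (X θ x))‖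
            ≤ ‖fderiv ℝ (perpGrad H) (X θ x)‖ * ‖perpGrad H (X θ x)‖ :=
              (fderiv ℝ (perpGrad H) (X θ x)).le_opNorm _
          _ ≤ L * Λ := mul_le_mul (hL _ (hΩS hmm)) (hbnorm _ hmm) (norm_nonneg _) hL0.le
      have h1 : |⟪w - X θ x, fderiv ℝ (perpGrad H) (X θ x) (perpGrad H (X θ x))⟫|
          ≤ c₀ ^ 2 / (2 * L * Λ) * (L * Λ) := by
        calc |⟪w - X θ x, fderiv ℝ (perpGrad H) (X θ x) (perpGrad H (X θ x))⟫|
            ≤ ‖w - X θ x‖ * ‖fderiv ℝ (perpGrad H) (X θ x) (perpGrad H (X θ x))‖ :=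
              abs_real_inner_le_norm _ _
          _ ≤ c₀ ^ 2 / (2 * L * Λ) * (L * Λ) :=
              mul_le_mul ((hIdist θ hθ).trans hthr) hop (norm_nonneg _) (by positivity)
      have h4 : c₀ ^ 2 / (2 * L * Λ) * (L * Λ) = c₀ ^ 2 / 2 := by field_simp
      have h5 : ⟪w - X θ x, fderiv ℝ (perpGrad H) (X θ x) (perpGrad H (X θ x))⟫ ≤ c₀ ^ 2 / 2 :=
        le_trans (le_abs_self _) (h1.trans_eq h4)
      have h2 : ⟪-(perpGrad H (X θ x)), perpGrad H (X θ x)⟫ = -(‖perpGrad H (X θ x)‖ ^ 2) := by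
        rw [inner_neg_left, real_inner_self_eq_norm_sq]
      have h3 : c₀ ^ 2 ≤ ‖perpGrad H (X θ x)‖ ^ 2 := pow_le_pow_left₀ hc₀.le (hblow _ hmm) 2
      show ⟪w - X θ x, fderiv ℝ (perpGrad H) (X θ x) (perpGrad H (X θ x))⟫ +
        ⟪-(perpGrad H (X θ x)), perpGrad H (X θ x)⟫ ≤ -(c₀ ^ 2 / 2)
      rw [h2]
      linarith
    set c : ℝ := c₀ ^ 2 / 2 with hcdef
    have hgc : Continuous g := continuous_iff_continuousAt.2 fun θ => (hg' θ).continuousAt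
    have hmono : AntitoneOn (fun θ => g θ + c * θ) (Icc (θg - β) (θg + β)) := by
      apply antitoneOn_of_deriv_nonpos (convex_Icc _ _)
      · exact (hgc.add (continuous_const.mul continuous_id)).continuousOn
      · intro θ _
        have h6 : HasDerivAt (fun θ : ℝ => c * θ) c θ := by
          simpa using (hasDerivAt_id θ).const_mul c
        exact ((hg' θ).add h6).differentiableAt.differentiableWithinAt
      · intro θ hθ
        rw [interior_Icc] at hθ
        have h6 : HasDerivAt (fun θ : ℝ => c * θ) c θ := by
          simpa using (hasDerivAt_id θ).const_mul c
        have hd : HasDerivAt (fun θ => g θ + c * θ) (D θ + c) θ := (hg' θ).add h6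
        rw [hd.deriv]
        have := hDneg θ (Ioo_subset_Icc_self hθ)
        linarith
    have hgθg : |g θg| ≤ Λ * η := by
      calc |g θg| ≤ ‖w - X θg x‖ * ‖perpGrad H (X θg x)‖ := abs_real_inner_le_norm _ _
        _ ≤ η * Λ := mul_le_mul hwθ (hbnorm _ (hmem x hx θg)) (norm_nonneg _) hη
        _ = Λ * η := mul_comm _ _
    have hΛη : 0 ≤ Λ * η := mul_nonneg hΛ0.le hη
    have hcβ : c * β = 2 * (Λ * η) := by rw [hcdef, hβdef]; field_simp; ring
    have hmem1 : θg - β ∈ Icc (θg - β) (θg + β) := by constructor <;> linarith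
    have hmem2 : θg ∈ Icc (θg - β) (θg + β) := by constructor <;> linarith
    have hmem3 : θg + β ∈ Icc (θg - β) (θg + β) := by constructor <;> linarith
    have habs' := abs_le.1 hgθg
    have hexp : c * (θg + β) = c * θg + c * β := by ring
    have hexp2 : c * (θg - β) = c * θg - c * β := by ring
    have hle : g (θg + β) ≤ 0 := by
      have := hmono hmem2 hmem3 (by linarith)
      dsimp only at this
      linarith
    have hge : 0 ≤ g (θg - β) := by
      have := hmono hmem1 hmem2 (by linarith)
      dsimp only at this
      linarith
    obtain ⟨θ, hθI, hθ0⟩ : ∃ θ ∈ Icc (θg - β) (θg + β), g θ = 0 := by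
      have := intermediate_value_Icc' (by linarith : θg - β ≤ θg + β) hgc.continuousOn
      obtain ⟨θ, hθ, hθ0⟩ := this ⟨hle, hge⟩
      exact ⟨θ, hθ, hθ0⟩
    refine ⟨θ, ?_, hθ0, hIdist θ hθI⟩
    exact abs_le.2 ⟨by linarith [hθI.1], by linarith [hθI.2]⟩
  -- global constants for the main estimate
  set E1 : ℝ := max 1 (Real.exp L * (2 / c₀) * Λ) with hE1def
  have hE1 : 1 ≤ E1 := le_max_left _ _
  have hE10 : 0 < E1 := lt_of_lt_of_le one_pos hE1
  set Q : ℝ := 1 + 4 * Λ ^ 2 / c₀ ^ 2 with hQdef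
  have hQ1 : 1 ≤ Q := by
    rw [hQdef]
    have : 0 ≤ 4 * Λ ^ 2 / c₀ ^ 2 := by positivity
    linarith
  have hQ0 : 0 < Q := lt_of_lt_of_le one_pos hQ1
  set εs : ℝ := min (c₀ ^ 2 / (2 * L * Λ)) (c₀ / (2 * M)) with hεsdef
  have hεs : 0 < εs := lt_min (by positivity) (by positivity)
  set C₁ : ℝ := E1 * Q with hC₁def
  have hC₁0 : 0 < C₁ := mul_pos hE10 hQ0
  set δ : ℝ := εs / C₁ with hδdef
  have hδ : 0 < δ := div_pos hεs hC₁0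
  -- the main estimate for nearby points
  have hsmall : ∀ x ∈ Ω₀, ∀ y ∈ Ω₀, ‖y - x‖ ≤ δ → ∀ t : ℝ, 0 ≤ t →
      ‖X t y - X t x‖ ≤ C₁ * (1 + t) * ‖y - x‖ := by
    intro x hx y hy hdδ t ht
    set d := ‖y - x‖ with hddef
    have hd0 : 0 ≤ d := norm_nonneg _
    set Δ := |H y - H x| with hΔdef
    have hΔ0 : 0 ≤ Δ := abs_nonneg _
    have hΔd : Δ ≤ Λ * d := hHlip y (hΩS hy) x (hΩS hx)
    have hρΔE : 2 / c₀ * Δ * Real.exp L ≤ E1 * d := by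
      have h1 : 2 / c₀ * Δ * Real.exp L ≤ 2 / c₀ * (Λ * d) * Real.exp L := by
        have := mul_le_mul_of_nonneg_left hΔd (by positivity : (0:ℝ) ≤ 2 / c₀)
        exact mul_le_mul_of_nonneg_right this (Real.exp_pos L).le
      have h2 : 2 / c₀ * (Λ * d) * Real.exp L = (Real.exp L * (2 / c₀) * Λ) * d := by ring
      have h3 : (Real.exp L * (2 / c₀) * Λ) * d ≤ E1 * d :=
        mul_le_mul_of_nonneg_right (le_max_right _ _) hd0
      linarith
    have hdE : d ≤ E1 * d := le_mul_of_one_le_left hd0 hE1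
    -- one foot-finding step with refinement by conservation of H
    have hkey : ∀ η : ℝ, 0 ≤ η → η ≤ E1 * d → ∀ w, w ∈ Ω₀ → ∀ θg : ℝ,
        ‖w - X θg x‖ ≤ η → H w = H y →
        ∃ θ : ℝ, |θ - θg| ≤ 4 * Λ * (E1 * d) / c₀ ^ 2 ∧
          ⟪w - X θ x, perpGrad H (X θ x)⟫ = 0 ∧ ‖w - X θ x‖ ≤ 2 / c₀ * Δ := by
      intro η hη0 hηE w hw θg hwθ hHw
      have hηQ : η * Q ≤ εs := by
        have e1 : η * Q ≤ E1 * d * Q := mul_le_mul_of_nonneg_right hηE hQ0.le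
        have e2 : E1 * d * Q ≤ E1 * δ * Q :=
          mul_le_mul_of_nonneg_right
            (mul_le_mul_of_nonneg_left hdδ hE10.le) hQ0.le
        have e3 : E1 * δ * Q = εs := by
          rw [hδdef, hC₁def]; field_simp
        linarith
      obtain ⟨θ, hθ1, hθ2, hθ3⟩ := hfoot x hx w hw θg η hη0 hwθ
        (hηQ.trans (by rw [hεsdef]; exact min_le_left _ _))
      have hoff : ‖w - X θ x‖ ≤ c₀ / (2 * M) :=
        hθ3.trans (hηQ.trans (by rw [hεsdef]; exact min_le_right _ _))
      have href := hrefine w hw (X θ x) (hmem x hx θ) hθ2 hoff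
      rw [hcons x hx θ, hHw] at href
      refine ⟨θ, ?_, hθ2, ?_⟩
      · refine hθ1.trans ?_
        gcongr
      · rw [← hΔdef] at href
        rw [div_mul_eq_mul_div, le_div_iff₀ hc₀]
        linarith [href]
    have hind : ∀ k : ℕ, ∃ θ : ℝ,
        ⟪X (k : ℝ) y - X θ x, perpGrad H (X θ x)⟫ = 0 ∧
        ‖X (k : ℝ) y - X θ x‖ ≤ 2 / c₀ * Δ ∧
        |θ - (k : ℝ)| ≤ ((k : ℝ) + 1) * (4 * Λ * (E1 * d) / c₀ ^ 2) := by
      intro k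
      induction k with
      | zero =>
        have h0 : ‖y - X 0 x‖ ≤ d := by rw [hX0]
        obtain ⟨θ, h1, h2, h3⟩ := hkey d hd0 hdE y hy 0 h0 rfl
        refine ⟨θ, ?_, ?_, ?_⟩
        · push_cast
          rw [hX0]
          exact h2
        · push_cast
          rw [hX0]
          exact h3
        · push_cast
          simp only [sub_zero, zero_add, one_mul]
          simpa using h1
      | succ k ih =>
        obtain ⟨θk, h1, h2, h3⟩ := ih
        have hstep := hgron x hx y hy (k : ℝ) θk (2 / c₀ * Δ) h2 1 zero_le_one le_rfl
        have hη0' : (0:ℝ) ≤ 2 / c₀ * Δ * Real.exp L :=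
          mul_nonneg (mul_nonneg (by positivity) hΔ0) (Real.exp_pos L).le
        obtain ⟨θ', g1, g2, g3⟩ := hkey (2 / c₀ * Δ * Real.exp L) hη0'
          hρΔE (X ((k : ℝ) + 1) y) (hmem y hy _) (θk + 1) hstep (hcons y hy _)
        refine ⟨θ', ?_, ?_, ?_⟩
        · push_cast
          exact g2
        · push_cast
          exact g3
        · push_cast
          have habs : |θ' - ((k : ℝ) + 1)| ≤ |θ' - (θk + 1)| + |θk - (k : ℝ)| := by
            have hre : θ' - ((k : ℝ) + 1) = (θ' - (θk + 1)) + (θk - (k : ℝ)) := by ring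
            rw [hre]
            exact abs_add_le _ _
          have hexp3 : ((k : ℝ) + 1 + 1) * (4 * Λ * (E1 * d) / c₀ ^ 2)
              = 4 * Λ * (E1 * d) / c₀ ^ 2 + ((k : ℝ) + 1) * (4 * Λ * (E1 * d) / c₀ ^ 2) := by
            ring
          linarith [g1, h3, habs]
    -- final bound at time t
    obtain ⟨θk, h1, h2, h3⟩ := hind ⌊t⌋₊
    have hk1 : (⌊t⌋₊ : ℝ) ≤ t := Nat.floor_le ht
    have hk2 : t < (⌊t⌋₊ : ℝ) + 1 := Nat.lt_floor_add_one t
    have hgr := hgron x hx y hy (⌊t⌋₊ : ℝ) θk (2 / c₀ * Δ) h2 (t - ⌊t⌋₊)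
      (by linarith) (by linarith)
    have hkt : ((⌊t⌋₊ : ℝ) + (t - ⌊t⌋₊)) = t := by ring
    rw [hkt] at hgr
    have htri : ‖X t y - X t x‖ ≤ ‖X t y - X (θk + (t - ⌊t⌋₊)) x‖
        + ‖X (θk + (t - ⌊t⌋₊)) x - X t x‖ := by
      have := dist_triangle (X t y) (X (θk + (t - ⌊t⌋₊)) x) (X t x)
      simpa [dist_eq_norm] using this
    have hsp := hspeed x hx (θk + (t - ⌊t⌋₊)) t
    have habs2 : |θk + (t - ⌊t⌋₊) - t| = |θk - (⌊t⌋₊ : ℝ)| := by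
      congr 1
      ring
    rw [habs2] at hsp
    have e5 : Λ * |θk - (⌊t⌋₊ : ℝ)| ≤ Λ * (((⌊t⌋₊ : ℝ) + 1) * (4 * Λ * (E1 * d) / c₀ ^ 2)) :=
      mul_le_mul_of_nonneg_left h3 hΛ0.le
    have hc1 : ‖X t y - X t x‖ ≤ E1 * d + Λ * (((⌊t⌋₊ : ℝ) + 1) * (4 * Λ * (E1 * d) / c₀ ^ 2)) := by
      linarith only [hgr, htri, hsp, hρΔE, e5]
    have hk3 : (⌊t⌋₊ : ℝ) + 1 ≤ 1 + t := by linarith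
    have e6 : Λ * (((⌊t⌋₊ : ℝ) + 1) * (4 * Λ * (E1 * d) / c₀ ^ 2))
        ≤ (1 + t) * (4 * Λ ^ 2 * E1 / c₀ ^ 2 * d) := by
      have hre : Λ * (((⌊t⌋₊ : ℝ) + 1) * (4 * Λ * (E1 * d) / c₀ ^ 2))
          = ((⌊t⌋₊ : ℝ) + 1) * (4 * Λ ^ 2 * E1 / c₀ ^ 2 * d) := by ring
      rw [hre]
      exact mul_le_mul_of_nonneg_right hk3 (by positivity)
    have e7 : E1 * d * 1 ≤ E1 * d * (1 + t) :=
      mul_le_mul_of_nonneg_left (by linarith) (mul_nonneg hE10.le hd0)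
    have ering : C₁ * (1 + t) * d = E1 * d * (1 + t) + (1 + t) * (4 * Λ ^ 2 * E1 / c₀ ^ 2 * d) := by
      rw [hC₁def, hQdef]
      ring
    linarith only [hc1, e6, e7, ering]
  -- conclusion
  have h2Rδ : (0:ℝ) ≤ 2 * R / δ := div_nonneg (by linarith) hδ.le
  refine ⟨C₁ + 2 * R / δ + 1, by linarith, ?_⟩
  intro x hx y hy t ht
  have h1t : (1:ℝ) ≤ 1 + t := by linarith
  have hdist0 : 0 ≤ dist x y := dist_nonneg
  rcases le_or_gt (dist x y) δ with hcase | hcase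
  · have hyx : ‖y - x‖ = dist x y := by rw [dist_comm, dist_eq_norm]
    have hsm := hsmall x hx y hy (by rw [hyx]; exact hcase) t ht
    have hd2 : dist (X t x) (X t y) = ‖X t y - X t x‖ := by rw [dist_comm, dist_eq_norm]
    rw [hd2, ← hyx]
    refine hsm.trans ?_
    have hfac : C₁ * (1 + t) ≤ (C₁ + 2 * R / δ + 1) * (1 + t) :=
      mul_le_mul_of_nonneg_right (by linarith) (by linarith)
    exact mul_le_mul_of_nonneg_right hfac (norm_nonneg _)
  · have hm1 : dist (X t x) 0 ≤ R := by
      have := hΩS (hmem x hx t)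
      rwa [hSdef, Metric.mem_closedBall] at this
    have hm2 : dist (X t y) 0 ≤ R := by
      have := hΩS (hmem y hy t)
      rwa [hSdef, Metric.mem_closedBall] at this
    have h2R : dist (X t x) (X t y) ≤ 2 * R := by
      have htr := dist_triangle (X t x) (0 : EuclideanSpace ℝ (Fin 2)) (X t y)
      have h9 : dist (0 : EuclideanSpace ℝ (Fin 2)) (X t y) = dist (X t y) 0 := dist_comm _ _
      linarith
    have h11 : 2 * R / δ * δ = 2 * R := by field_simp
    have h12 : 2 * R / δ * δ ≤ 2 * R / δ * dist x y :=
      mul_le_mul_of_nonneg_left hcase.le h2Rδ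
    have h14 : 2 * R / δ ≤ (C₁ + 2 * R / δ + 1) * (1 + t) := by
      have h15 : (C₁ + 2 * R / δ + 1) * 1 ≤ (C₁ + 2 * R / δ + 1) * (1 + t) :=
        mul_le_mul_of_nonneg_left h1t (by linarith)
      linarith
    have h13 : 2 * R / δ * dist x y ≤ (C₁ + 2 * R / δ + 1) * (1 + t) * dist x y :=
      mul_le_mul_of_nonneg_right h14 hdist0
    linarith
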